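/- For every real ν and every real x > 0, the Bessel function of the first kind satisfies |J_ν(x)| ≤ c_ν · x^ν · (1+x)^{-ν-1/2} for some constant c_ν depending only on ν. -/

import Mathlib

open Real Filter

/-- The Bessel function of the first kind of real order `ν`, defined by its
standard power series `J_ν(x) = Σ_{m≥0} (-1)^m / (m! Γ(m+ν+1)) (x/2)^{2m+ν}`. -/
noncomputable def besselJ (ν : ℝ) (x : ℝ) : ℝ :=
  ∑' m : ℕ, ((-1 : ℝ) ^ m / ((m.factorial : ℝ) * Real.Gamma (m + ν + 1))) *
    (x / 2) ^ (2 * m) * (x / 2) ^ ν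

noncomputable def bc (ν : ℝ) (m : ℕ) : ℝ :=
  (-1 : ℝ) ^ m / ((m.factorial : ℝ) * Real.Gamma (m + ν + 1))

lemma bc_rec (ν : ℝ) (m : ℕ) :
    ((m : ℝ) + 1) * ((m : ℝ) + 1 + ν) * bc ν (m + 1) = - bc ν m := by
  have hfac : ((m + 1).factorial : ℝ) = ((m : ℝ) + 1) * m.factorial := by
    push_cast [Nat.factorial_succ]; ring
  simp only [bc, hfac]
  have harg : ((m + 1 : ℕ) : ℝ) + ν + 1 = ((m : ℝ) + ν + 1) + 1 := by push_cast; ring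
  rw [harg]
  set s : ℝ := (m : ℝ) + ν + 1 with hs
  by_cases h0 : s = 0
  · have h1 : Real.Gamma (s + 1) = 1 := by rw [h0, zero_add, Real.Gamma_one]
    have h2 : Real.Gamma s = 0 := by
      rw [h0]; simpa using Real.Gamma_neg_nat_eq_zero 0
    have hm : (m : ℝ) + 1 + ν = 0 := by rw [← h0]; ring
    rw [h1, h2, hm]
    simp
  · rw [Real.Gamma_add_one h0]
    by_cases hg : Real.Gamma s = 0
    · rw [hg]; simp
    · have hmne : ((m : ℝ) + 1) ≠ 0 := by positivity
      have hfne : (m.factorial : ℝ) ≠ 0 := by positivity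
      have hmν : (m : ℝ) + 1 + ν = s := by rw [hs]; ring
      rw [hmν]
      field_simp
      ring

lemma bc_summable (ν : ℝ) {q : ℝ} (hq : 0 ≤ q) :
    Summable (fun m : ℕ => |bc ν m| * ((m : ℝ) + 1) ^ 2 * q ^ m) := by
  apply summable_of_ratio_norm_eventually_le (r := 1/2) (by norm_num)
  filter_upwards [eventually_ge_atTop (max ⌈8 * q⌉₊ ⌈-ν⌉₊)] with m hm
  have hm1 : (⌈8 * q⌉₊ : ℝ) ≤ m := by exact_mod_cast Nat.cast_le.mpr (le_trans (le_max_left _ _) hm)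
  have hm2 : (⌈-ν⌉₊ : ℝ) ≤ m := by exact_mod_cast Nat.cast_le.mpr (le_trans (le_max_right _ _) hm)
  have h8q : 8 * q ≤ (m : ℝ) := le_trans (Nat.le_ceil _) hm1
  have hν : -ν ≤ (m : ℝ) := le_trans (Nat.le_ceil _) hm2
  have h1 : (1 : ℝ) ≤ (m : ℝ) + 1 + ν := by linarith
  have habs : |bc ν m| = ((m : ℝ) + 1) * ((m : ℝ) + 1 + ν) * |bc ν (m + 1)| := by
    have := bc_rec ν m
    have h2 : |((m : ℝ) + 1) * ((m : ℝ) + 1 + ν) * bc ν (m + 1)| = |bc ν m| := by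
      rw [this, abs_neg]
    rw [← h2, abs_mul, abs_mul]
    rw [abs_of_nonneg (by positivity : (0:ℝ) ≤ (m : ℝ) + 1), abs_of_nonneg (by linarith)]
  have hB : (0 : ℝ) ≤ |bc ν (m + 1)| := abs_nonneg _
  have hQ : (0 : ℝ) ≤ q ^ m := by positivity
  have norm_eq : ∀ k : ℕ, ‖|bc ν k| * ((k : ℝ) + 1) ^ 2 * q ^ k‖ =
      |bc ν k| * ((k : ℝ) + 1) ^ 2 * q ^ k := fun k => Real.norm_of_nonneg (by positivity)
  rw [norm_eq, norm_eq]
  push_cast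
  rw [habs]
  -- goal: |bc(m+1)| * ((m+1)+1)^2 * q^(m+1) ≤ 1/2 * ((m+1)*(m+1+ν)*|bc(m+1)| * (m+1)^2 * q^m)
  have key : ((m : ℝ) + 1 + 1) ^ 2 * q ≤ 1/2 * (((m : ℝ) + 1) * ((m : ℝ) + 1 + ν) * ((m : ℝ) + 1) ^ 2) := by
    have e1 : ((m : ℝ) + 1 + 1) ^ 2 ≤ 4 * ((m : ℝ) + 1) ^ 2 := by nlinarith [Nat.cast_nonneg (α := ℝ) m]
    have e2 : ((m : ℝ) + 1 + 1) ^ 2 * q ≤ 4 * ((m : ℝ) + 1) ^ 2 * q :=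
      mul_le_mul_of_nonneg_right e1 hq
    have e3 : 4 * ((m : ℝ) + 1) ^ 2 * q ≤ 1/2 * (((m : ℝ) + 1) * 1 * ((m : ℝ) + 1) ^ 2) := by
      nlinarith [sq_nonneg ((m:ℝ)+1), Nat.cast_nonneg (α := ℝ) m]
    have e4 : 1/2 * (((m : ℝ) + 1) * 1 * ((m : ℝ) + 1) ^ 2) ≤ 1/2 * (((m : ℝ) + 1) * ((m : ℝ) + 1 + ν) * ((m : ℝ) + 1) ^ 2) := by
      have : ((m : ℝ) + 1) * 1 ≤ ((m : ℝ) + 1) * ((m : ℝ) + 1 + ν) :=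
        mul_le_mul_of_nonneg_left h1 (by positivity)
      nlinarith [sq_nonneg ((m:ℝ)+1)]
    linarith
  calc |bc ν (m + 1)| * ((m : ℝ) + 1 + 1) ^ 2 * q ^ (m + 1)
      = (((m : ℝ) + 1 + 1) ^ 2 * q) * (|bc ν (m + 1)| * q ^ m) := by ring
    _ ≤ (1/2 * (((m : ℝ) + 1) * ((m : ℝ) + 1 + ν) * ((m : ℝ) + 1) ^ 2)) * (|bc ν (m + 1)| * q ^ m) :=
        mul_le_mul_of_nonneg_right key (by positivity)
    _ = 1/2 * (((m : ℝ) + 1) * ((m : ℝ) + 1 + ν) * |bc ν (m + 1)| * ((m : ℝ) + 1) ^ 2 * q ^ m) := by ring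

noncomputable def bF (ν x : ℝ) : ℝ := ∑' m : ℕ, bc ν m * (x / 2) ^ (2 * m)
noncomputable def bF1 (ν x : ℝ) : ℝ := ∑' m : ℕ, bc ν m * (m : ℝ) * (x / 2) ^ (2 * m - 1)
noncomputable def bF2 (ν x : ℝ) : ℝ :=
  ∑' m : ℕ, bc ν m * ((m : ℝ) * (2 * (m : ℝ) - 1) / 2) * (x / 2) ^ (2 * m - 2)

-- pointwise npow bound helper
lemma pow_half_bound {y R : ℝ} (hR : 2 ≤ R) (hy : |y| ≤ R) {k m : ℕ} (hk : k ≤ 2 * m) :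
    |(y / 2) ^ k| ≤ (((R / 2) ^ 2) ^ m) := by
  have h1 : |y / 2| ≤ R / 2 := by rw [abs_div]; simp only [abs_two]; linarith [abs_nonneg y]
  have h2 : (1 : ℝ) ≤ R / 2 := by linarith
  calc |(y / 2) ^ k| = |y / 2| ^ k := by rw [abs_pow]
    _ ≤ (R / 2) ^ k := pow_le_pow_left₀ (abs_nonneg _) h1 k
    _ ≤ (R / 2) ^ (2 * m) := pow_le_pow_right₀ h2 hk
    _ = ((R / 2) ^ 2) ^ m := by rw [← pow_mul, mul_comm 2 m, pow_mul]

lemma summable_bF (ν x : ℝ) : Summable (fun m : ℕ => bc ν m * (x / 2) ^ (2 * m)) := by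
  set R : ℝ := max 2 (|x|) with hR
  have hR2 : 2 ≤ R := le_max_left _ _
  have hxR : |x| ≤ R := le_max_right _ _
  have hq : (0 : ℝ) ≤ (R / 2) ^ 2 := sq_nonneg _
  refine Summable.of_norm_bounded (bc_summable ν hq) fun m => ?_
  rw [Real.norm_eq_abs, abs_mul]
  calc |bc ν m| * |(x / 2) ^ (2 * m)| ≤ |bc ν m| * ((R / 2) ^ 2) ^ m :=
        mul_le_mul_of_nonneg_left (pow_half_bound hR2 hxR le_rfl) (abs_nonneg _)
    _ ≤ |bc ν m| * ((m : ℝ) + 1) ^ 2 * ((R / 2) ^ 2) ^ m := by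
        have h1 : (1:ℝ) ≤ ((m : ℝ) + 1) ^ 2 := by nlinarith [Nat.cast_nonneg (α := ℝ) m]
        have := mul_le_mul_of_nonneg_right (mul_le_mul_of_nonneg_left h1 (abs_nonneg (bc ν m)))
          (pow_nonneg hq m)
        nlinarith [abs_nonneg (bc ν m), pow_nonneg hq m]

lemma bF_hasDerivAt (ν x : ℝ) : HasDerivAt (bF ν) (bF1 ν x) x := by
  set R : ℝ := max 2 (|x| + 1) with hRdef
  have hR2 : 2 ≤ R := le_max_left _ _
  have hxR : |x| < R := lt_of_lt_of_le (by linarith [abs_nonneg x]) (le_max_right _ _)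
  have hq : (0 : ℝ) ≤ (R / 2) ^ 2 := sq_nonneg _
  have := hasDerivAt_tsum_of_isPreconnected
    (u := fun m : ℕ => |bc ν m| * ((m : ℝ) + 1) ^ 2 * ((R / 2) ^ 2) ^ m)
    (g := fun m y => bc ν m * (y / 2) ^ (2 * m))
    (g' := fun m y => bc ν m * (m : ℝ) * (y / 2) ^ (2 * m - 1)) (y₀ := 0)
    (bc_summable ν hq) (isOpen_Ioo (a := -R) (b := R)) (convex_Ioo _ _).isPreconnected
    (fun m y _ => ?_) (fun m y hy => ?_) (Set.mem_Ioo.mpr ⟨by linarith, by linarith⟩) ?_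
    (Set.mem_Ioo.mpr ⟨by linarith [neg_abs_le x, abs_nonneg x], lt_of_le_of_lt (le_abs_self x) hxR⟩)
  · exact this
  · -- HasDerivAt for each term
    have h := (((hasDerivAt_id y).div_const 2).pow (2 * m)).const_mul (bc ν m)
    simp only [Pi.pow_def, id_eq] at h
    refine h.congr_deriv ?_
    push_cast
    ring
  · -- bound on derivatives
    have hy' : |y| ≤ R := by
      rcases Set.mem_Ioo.mp hy with ⟨h1, h2⟩
      rw [abs_le]; constructor <;> linarith
    rw [Real.norm_eq_abs, abs_mul, abs_mul]
    have hb := pow_half_bound hR2 hy' (k := 2 * m - 1) (m := m) (by omega)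
    calc |bc ν m| * |(m : ℝ)| * |(y / 2) ^ (2 * m - 1)|
        ≤ |bc ν m| * |(m : ℝ)| * ((R / 2) ^ 2) ^ m := by
          apply mul_le_mul_of_nonneg_left hb (by positivity)
      _ ≤ |bc ν m| * ((m : ℝ) + 1) ^ 2 * ((R / 2) ^ 2) ^ m := by
          have : |(m : ℝ)| ≤ ((m : ℝ) + 1) ^ 2 := by
            rw [abs_of_nonneg (Nat.cast_nonneg m)]
            nlinarith [Nat.cast_nonneg (α := ℝ) m]
          have := mul_le_mul_of_nonneg_left this (abs_nonneg (bc ν m))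
          have hqq : (0:ℝ) ≤ ((R / 2) ^ 2) ^ m := pow_nonneg hq m
          nlinarith
  · -- summable at 0
    apply (summable_bF ν 0)

lemma bF1_hasDerivAt (ν x : ℝ) : HasDerivAt (bF1 ν) (bF2 ν x) x := by
  set R : ℝ := max 2 (|x| + 1) with hRdef
  have hR2 : 2 ≤ R := le_max_left _ _
  have hxR : |x| < R := lt_of_lt_of_le (by linarith [abs_nonneg x]) (le_max_right _ _)
  have hq : (0 : ℝ) ≤ (R / 2) ^ 2 := sq_nonneg _
  have := hasDerivAt_tsum_of_isPreconnected
    (u := fun m : ℕ => 2 * (|bc ν m| * ((m : ℝ) + 1) ^ 2 * ((R / 2) ^ 2) ^ m))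
    (g := fun m y => bc ν m * (m : ℝ) * (y / 2) ^ (2 * m - 1))
    (g' := fun m y => bc ν m * ((m : ℝ) * (2 * (m : ℝ) - 1) / 2) * (y / 2) ^ (2 * m - 2)) (y₀ := 0)
    ((bc_summable ν hq).mul_left 2) (isOpen_Ioo (a := -R) (b := R))
    (convex_Ioo _ _).isPreconnected
    (fun m y _ => ?_) (fun m y hy => ?_) (Set.mem_Ioo.mpr ⟨by linarith, by linarith⟩) ?_
    (Set.mem_Ioo.mpr ⟨by linarith [neg_abs_le x, abs_nonneg x], lt_of_le_of_lt (le_abs_self x) hxR⟩)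
  · exact this
  · have h := (((hasDerivAt_id y).div_const 2).pow (2 * m - 1)).const_mul (bc ν m * (m : ℝ))
    simp only [Pi.pow_def, id_eq] at h
    have he : 2 * m - 1 - 1 = 2 * m - 2 := by omega
    rw [he] at h
    refine h.congr_deriv ?_
    rcases m with - | n
    · norm_num
    · have hc : ((2 * (n + 1) - 1 : ℕ) : ℝ) = 2 * ((n : ℝ) + 1) - 1 := by
        push_cast [Nat.cast_sub (by omega : 1 ≤ 2 * (n + 1))]; ring
      push_cast [hc]
      ring
  · have hy' : |y| ≤ R := by
      rcases Set.mem_Ioo.mp hy with ⟨h1, h2⟩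
      rw [abs_le]; constructor <;> linarith
    rw [Real.norm_eq_abs, abs_mul]
    have hb := pow_half_bound hR2 hy' (k := 2 * m - 2) (m := m) (by omega)
    have hco : |(m : ℝ) * (2 * (m : ℝ) - 1) / 2| ≤ 2 * ((m : ℝ) + 1) ^ 2 := by
      rw [abs_div, abs_mul, abs_two, abs_of_nonneg (Nat.cast_nonneg m)]
      have h1 : |2 * (m : ℝ) - 1| ≤ 2 * (m : ℝ) + 1 := by
        rw [abs_le]; constructor <;> nlinarith [Nat.cast_nonneg (α := ℝ) m]
      have h2 : (m : ℝ) * |2 * (m : ℝ) - 1| ≤ (m : ℝ) * (2 * (m : ℝ) + 1) :=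
        mul_le_mul_of_nonneg_left h1 (Nat.cast_nonneg m)
      nlinarith [Nat.cast_nonneg (α := ℝ) m]
    rw [abs_mul]
    have hqq : (0:ℝ) ≤ ((R / 2) ^ 2) ^ m := pow_nonneg hq m
    calc |bc ν m| * |(m : ℝ) * (2 * (m : ℝ) - 1) / 2| * |(y / 2) ^ (2 * m - 2)|
        ≤ |bc ν m| * (2 * ((m : ℝ) + 1) ^ 2) * ((R / 2) ^ 2) ^ m := by
          apply mul_le_mul (mul_le_mul_of_nonneg_left hco (abs_nonneg _)) hb (abs_nonneg _)
          positivity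
      _ = 2 * (|bc ν m| * ((m : ℝ) + 1) ^ 2 * ((R / 2) ^ 2) ^ m) := by ring
  · refine summable_zero.congr fun m => ?_
    rcases m with - | n
    · norm_num
    · show (0:ℝ) = bc ν (n+1) * (((n+1 : ℕ)):ℝ) * ((0:ℝ) / 2) ^ (2 * (n+1) - 1)
      rw [zero_div, zero_pow (n := 2 * (n + 1) - 1) (by omega)]
      ring






lemma besselJ_eq (ν x : ℝ) : besselJ ν x = bF ν x * (x / 2) ^ ν := by
  rw [besselJ, bF, ← tsum_mul_right]
  rfl

lemma summable_helper (ν x : ℝ) (co : ℕ → ℝ) (C : ℝ)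
    (hco : ∀ m : ℕ, |co m| ≤ C * ((m : ℝ) + 1) ^ 2) :
    Summable (fun m : ℕ => co m * bc ν m * (x / 2) ^ (2 * m)) := by
  set q : ℝ := (x / 2) ^ 2 with hqdef
  have hq : 0 ≤ q := sq_nonneg _
  refine Summable.of_norm_bounded ((bc_summable ν hq).mul_left C) fun m => ?_
  rw [Real.norm_eq_abs, abs_mul, abs_mul]
  have hpow : |(x / 2) ^ (2 * m)| = q ^ m := by
    rw [abs_pow, pow_mul, sq_abs]
  rw [hpow]
  have h1 : |co m| * |bc ν m| ≤ C * ((m : ℝ) + 1) ^ 2 * |bc ν m| :=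
    mul_le_mul_of_nonneg_right (hco m) (abs_nonneg _)
  calc |co m| * |bc ν m| * q ^ m ≤ C * ((m : ℝ) + 1) ^ 2 * |bc ν m| * q ^ m :=
        mul_le_mul_of_nonneg_right h1 (pow_nonneg hq m)
    _ = C * (|bc ν m| * ((m : ℝ) + 1) ^ 2 * q ^ m) := by ring

lemma bF_ode (ν x : ℝ) :
    x ^ 2 * bF2 ν x + (2 * ν + 1) * (x * bF1 ν x) + x ^ 2 * bF ν x = 0 := by
  have hS1 : Summable (fun m : ℕ =>
      (2 * (m : ℝ) * (2 * (m : ℝ) - 1)) * bc ν m * (x / 2) ^ (2 * m)) := by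
    refine summable_helper ν x _ 4 fun m => ?_
    have hm : (0:ℝ) ≤ (m : ℝ) := Nat.cast_nonneg m
    rw [abs_mul, abs_mul, abs_two, abs_of_nonneg hm]
    have : |2 * (m : ℝ) - 1| ≤ 2 * (m : ℝ) + 1 := by rw [abs_le]; constructor <;> nlinarith
    nlinarith [abs_nonneg (2 * (m:ℝ) - 1)]
  have hS2 : Summable (fun m : ℕ =>
      (2 * (2 * ν + 1) * (m : ℝ)) * bc ν m * (x / 2) ^ (2 * m)) := by
    refine summable_helper ν x _ (2 * |2 * ν + 1|) fun m => ?_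
    have hm : (0:ℝ) ≤ (m : ℝ) := Nat.cast_nonneg m
    rw [abs_mul, abs_mul, abs_two]
    rw [abs_of_nonneg hm, mul_assoc, mul_assoc]
    refine mul_le_mul_of_nonneg_left ?_ (by norm_num : (0:ℝ) ≤ 2)
    refine mul_le_mul_of_nonneg_left ?_ (abs_nonneg _)
    nlinarith
  have e2 : x ^ 2 * bF2 ν x =
      ∑' m : ℕ, (2 * (m : ℝ) * (2 * (m : ℝ) - 1)) * bc ν m * (x / 2) ^ (2 * m) := by
    rw [bF2, ← tsum_mul_left]
    refine tsum_congr fun m => ?_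
    rcases m with - | n
    · norm_num
    · rw [show 2 * (n + 1) - 2 = 2 * n from by omega, show 2 * (n + 1) = 2 * n + 2 from by omega]
      push_cast
      ring
  have e1 : (2 * ν + 1) * (x * bF1 ν x) =
      ∑' m : ℕ, (2 * (2 * ν + 1) * (m : ℝ)) * bc ν m * (x / 2) ^ (2 * m) := by
    rw [bF1, ← tsum_mul_left, ← tsum_mul_left]
    refine tsum_congr fun m => ?_
    rcases m with - | n
    · norm_num
    · rw [show 2 * (n + 1) - 1 = 2 * n + 1 from by omega, show 2 * (n + 1) = 2 * n + 2 from by omega]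
      push_cast
      ring
  have e0 : x ^ 2 * bF ν x = ∑' m : ℕ, 4 * bc ν m * (x / 2) ^ (2 * m + 2) := by
    rw [bF, ← tsum_mul_left]
    refine tsum_congr fun m => ?_
    ring
  rw [e2, e1, e0, ← Summable.tsum_add hS1 hS2]
  set g : ℕ → ℝ := fun m => (4 * (m : ℝ) * ((m : ℝ) + ν)) * bc ν m * (x / 2) ^ (2 * m) with hgdef
  have hgeq : ∀ m : ℕ, (2 * (m : ℝ) * (2 * (m : ℝ) - 1)) * bc ν m * (x / 2) ^ (2 * m) +
      (2 * (2 * ν + 1) * (m : ℝ)) * bc ν m * (x / 2) ^ (2 * m) = g m := fun m => by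
    rw [hgdef]; ring
  rw [tsum_congr hgeq]
  have hgsum : Summable g := (hS1.add hS2).congr hgeq
  rw [Summable.tsum_eq_zero_add hgsum]
  have hg0 : g 0 = 0 := by rw [hgdef]; norm_num
  have hgsucc : ∀ m : ℕ, g (m + 1) = -(4 * bc ν m * (x / 2) ^ (2 * m + 2)) := fun m => by
    simp only [hgdef]
    have hrec := bc_rec ν m
    rw [show 2 * (m + 1) = 2 * m + 2 from by omega]
    push_cast
    calc 4 * ((m:ℝ) + 1) * (((m:ℝ) + 1) + ν) * bc ν (m + 1) * (x / 2) ^ (2 * m + 2)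
        = 4 * ((((m:ℝ) + 1) * (((m:ℝ)) + 1 + ν) * bc ν (m + 1))) * (x / 2) ^ (2 * m + 2) := by ring
      _ = 4 * (- bc ν m) * (x / 2) ^ (2 * m + 2) := by rw [hrec]
      _ = -(4 * bc ν m * (x / 2) ^ (2 * m + 2)) := by ring
  rw [hg0, tsum_congr hgsucc, tsum_neg]
  ring

noncomputable def bY (ν x : ℝ) : ℝ := (2:ℝ) ^ (-ν) * (x ^ (ν + 1/2) * bF ν x)
noncomputable def bY1 (ν x : ℝ) : ℝ :=
  (2:ℝ) ^ (-ν) * ((ν + 1/2) * x ^ (ν - 1/2) * bF ν x + x ^ (ν + 1/2) * bF1 ν x)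
noncomputable def bY2 (ν x : ℝ) : ℝ :=
  (2:ℝ) ^ (-ν) * ((ν + 1/2) * (ν - 1/2) * x ^ (ν - 3/2) * bF ν x
    + 2 * (ν + 1/2) * x ^ (ν - 1/2) * bF1 ν x + x ^ (ν + 1/2) * bF2 ν x)

lemma bY_hasDerivAt (ν : ℝ) {x : ℝ} (hx : 0 < x) : HasDerivAt (bY ν) (bY1 ν x) x := by
  have h1 : HasDerivAt (fun x : ℝ => x ^ (ν + 1/2)) ((ν + 1/2) * x ^ (ν + 1/2 - 1)) x :=
    Real.hasDerivAt_rpow_const (Or.inl hx.ne')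
  have h := (h1.mul (bF_hasDerivAt ν x)).const_mul ((2:ℝ) ^ (-ν))
  simp only [Pi.mul_def] at h
  refine h.congr_deriv ?_
  all_goals rw [bY1, show ν + 1/2 - 1 = ν - 1/2 by ring]
  all_goals ring

lemma bY1_hasDerivAt (ν : ℝ) {x : ℝ} (hx : 0 < x) : HasDerivAt (bY1 ν) (bY2 ν x) x := by
  have h1 : HasDerivAt (fun x : ℝ => x ^ (ν - 1/2)) ((ν - 1/2) * x ^ (ν - 1/2 - 1)) x :=
    Real.hasDerivAt_rpow_const (Or.inl hx.ne')
  have h2 : HasDerivAt (fun x : ℝ => x ^ (ν + 1/2)) ((ν + 1/2) * x ^ (ν + 1/2 - 1)) x :=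
    Real.hasDerivAt_rpow_const (Or.inl hx.ne')
  have hA : HasDerivAt (fun x : ℝ => (ν + 1/2) * x ^ (ν - 1/2) * bF ν x)
      (((ν - 1/2) * x ^ (ν - 1/2 - 1) * (ν + 1/2)) * bF ν x
        + ((ν + 1/2) * x ^ (ν - 1/2)) * bF1 ν x) x := by
    have := ((h1.const_mul (ν + 1/2)).mul (bF_hasDerivAt ν x))
    simp only [Pi.mul_def] at this
    refine this.congr_deriv ?_
    ring
  have hB : HasDerivAt (fun x : ℝ => x ^ (ν + 1/2) * bF1 ν x)
      (((ν + 1/2) * x ^ (ν + 1/2 - 1)) * bF1 ν x + x ^ (ν + 1/2) * bF2 ν x) x :=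
    h2.mul (bF1_hasDerivAt ν x)
  have h := (hA.add hB).const_mul ((2:ℝ) ^ (-ν))
  simp only [Pi.add_def] at h
  refine h.congr_deriv ?_
  all_goals rw [bY2, show ν + 1/2 - 1 = ν - 1/2 by ring,
    show ν - 1/2 - 1 = ν - 3/2 by ring]
  all_goals ring

lemma bY_ode (ν : ℝ) {x : ℝ} (hx : 0 < x) :
    x ^ 2 * (bY2 ν x + bY ν x) = (ν ^ 2 - 1/4) * bY ν x := by
  have hA1 : x ^ (ν - 1/2) = x ^ (ν - 3/2) * x := by
    rw [show ν - 1/2 = (ν - 3/2) + 1 by ring, Real.rpow_add hx, Real.rpow_one]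
  have hA2 : x ^ (ν + 1/2) = x ^ (ν - 3/2) * x ^ 2 := by
    rw [show ν + 1/2 = (ν - 3/2) + ((2:ℕ):ℝ) by push_cast; ring, Real.rpow_add hx,
      Real.rpow_natCast]
  rw [bY, bY2, hA1, hA2]
  linear_combination ((2:ℝ) ^ (-ν) * x ^ (ν - 3/2) * x ^ 2) * bF_ode ν x

noncomputable def bE (ν x : ℝ) : ℝ := (bY ν x) ^ 2 + (bY1 ν x) ^ 2
noncomputable def bPhi (ν x : ℝ) : ℝ := bE ν x * Real.exp (|ν ^ 2 - 1/4| * x⁻¹)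

lemma bE_hasDerivAt (ν : ℝ) {x : ℝ} (hx : 0 < x) :
    HasDerivAt (bE ν)
      (2 * bY ν x * bY1 ν x + 2 * bY1 ν x * bY2 ν x) x := by
  have h1 := ((bY_hasDerivAt ν hx).mul (bY_hasDerivAt ν hx)).add
    ((bY1_hasDerivAt ν hx).mul (bY1_hasDerivAt ν hx))
  have : bE ν = fun x => bY ν x * bY ν x + bY1 ν x * bY1 ν x := by
    funext z; rw [bE]; ring
  rw [this]
  simp only [Pi.add_def, Pi.mul_def] at h1
  refine h1.congr_deriv ?_
  ring

lemma bPhi_hasDerivAt (ν : ℝ) {x : ℝ} (hx : 0 < x) :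
    HasDerivAt (bPhi ν)
      ((2 * bY ν x * bY1 ν x + 2 * bY1 ν x * bY2 ν x) * Real.exp (|ν ^ 2 - 1/4| * x⁻¹)
        + bE ν x * (Real.exp (|ν ^ 2 - 1/4| * x⁻¹) * (|ν ^ 2 - 1/4| * -(x ^ 2)⁻¹))) x := by
  have hinv := (hasDerivAt_inv hx.ne').const_mul (|ν ^ 2 - 1/4|)
  have hexp := hinv.exp
  exact (bE_hasDerivAt ν hx).mul hexp

lemma bPhi_deriv_nonpos (ν : ℝ) {x : ℝ} (hx : 0 < x) :
    (2 * bY ν x * bY1 ν x + 2 * bY1 ν x * bY2 ν x) * Real.exp (|ν ^ 2 - 1/4| * x⁻¹)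
      + bE ν x * (Real.exp (|ν ^ 2 - 1/4| * x⁻¹) * (|ν ^ 2 - 1/4| * -(x ^ 2)⁻¹)) ≤ 0 := by
  set c : ℝ := |ν ^ 2 - 1/4| with hc
  set y := bY ν x
  set y1 := bY1 ν x
  set y2 := bY2 ν x
  have hx2 : (0:ℝ) < x ^ 2 := by positivity
  have hode : y2 = (ν ^ 2 - 1/4) * y / x ^ 2 - y := by
    have h := bY_ode ν hx
    field_simp
    linarith [h]
  have hcnn : 0 ≤ c := abs_nonneg _
  have hG : 0 < Real.exp (c * x⁻¹) := Real.exp_pos _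
  have hkey : 2 * y * y1 + 2 * y1 * y2 ≤ (y ^ 2 + y1 ^ 2) * (c / x ^ 2) := by
    rw [hode]
    have hE' : 2 * y * y1 + 2 * y1 * ((ν ^ 2 - 1/4) * y / x ^ 2 - y)
        = (2 * y1 * y) * ((ν ^ 2 - 1/4) / x ^ 2) := by field_simp; ring
    rw [hE']
    have habs : |(ν ^ 2 - 1/4) / x ^ 2| = c / x ^ 2 := by
      rw [abs_div, abs_of_pos hx2]
    have h1 : (2 * y1 * y) * ((ν ^ 2 - 1/4) / x ^ 2) ≤ |2 * y1 * y| * (c / x ^ 2) := by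
      calc (2 * y1 * y) * ((ν ^ 2 - 1/4) / x ^ 2) ≤ |(2 * y1 * y) * ((ν ^ 2 - 1/4) / x ^ 2)| :=
            le_abs_self _
        _ = |2 * y1 * y| * (c / x ^ 2) := by rw [abs_mul, habs]
    refine h1.trans ?_
    have h2 : |2 * y1 * y| ≤ y ^ 2 + y1 ^ 2 := by
      rw [abs_mul, abs_mul, abs_two]
      nlinarith [sq_nonneg (|y1| - |y|), sq_abs y, sq_abs y1, abs_nonneg y, abs_nonneg y1]
    exact mul_le_mul_of_nonneg_right h2 (by positivity)
  have hfin : (2 * y * y1 + 2 * y1 * y2) * Real.exp (c * x⁻¹)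
      ≤ -(bE ν x * (Real.exp (c * x⁻¹) * (c * -(x ^ 2)⁻¹))) := by
    have hEeq : bE ν x = y ^ 2 + y1 ^ 2 := rfl
    rw [hEeq]
    have : -((y ^ 2 + y1 ^ 2) * (Real.exp (c * x⁻¹) * (c * -(x ^ 2)⁻¹)))
        = ((y ^ 2 + y1 ^ 2) * (c / x ^ 2)) * Real.exp (c * x⁻¹) := by
      field_simp
    rw [this]
    exact mul_le_mul_of_nonneg_right hkey hG.le
  linarith [hfin]

lemma bY_bound (ν : ℝ) {x : ℝ} (hx : 1 ≤ x) :
    |bY ν x| ≤ Real.sqrt (bPhi ν 1) := by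
  have hant : AntitoneOn (bPhi ν) (Set.Ici 1) := by
    apply antitoneOn_of_deriv_nonpos (convex_Ici 1)
    · intro z hz
      have hz0 : (0:ℝ) < z := lt_of_lt_of_le one_pos hz
      exact (bPhi_hasDerivAt ν hz0).continuousAt.continuousWithinAt
    · intro z hz
      rw [interior_Ici] at hz
      have hz0 : (0:ℝ) < z := lt_of_lt_of_le one_pos (le_of_lt hz)
      exact (bPhi_hasDerivAt ν hz0).differentiableAt.differentiableWithinAt
    · intro z hz
      rw [interior_Ici] at hz
      have hz0 : (0:ℝ) < z := lt_of_lt_of_le one_pos (le_of_lt hz)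
      rw [(bPhi_hasDerivAt ν hz0).deriv]
      exact bPhi_deriv_nonpos ν hz0
  have hx0 : (0:ℝ) < x := lt_of_lt_of_le one_pos hx
  have hEnn : 0 ≤ bE ν x := by rw [bE]; positivity
  have h1 : bE ν x ≤ bPhi ν x := by
    rw [bPhi]
    nlinarith [Real.one_le_exp (by positivity : (0:ℝ) ≤ |ν ^ 2 - 1/4| * x⁻¹)]
  have h2 : bPhi ν x ≤ bPhi ν 1 := hant (Set.mem_Ici.mpr le_rfl) (Set.mem_Ici.mpr hx) hx
  have h3 : (bY ν x) ^ 2 ≤ bPhi ν 1 := by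
    have : (bY ν x) ^ 2 ≤ bE ν x := by rw [bE]; nlinarith [sq_nonneg (bY1 ν x)]
    linarith
  calc |bY ν x| = Real.sqrt ((bY ν x) ^ 2) := (Real.sqrt_sq_eq_abs _).symm
    _ ≤ Real.sqrt (bPhi ν 1) := Real.sqrt_le_sqrt h3


lemma bF_def (ν x : ℝ) : bF ν x = ∑' m : ℕ, bc ν m * (x / 2) ^ (2 * m) := rfl

lemma bY_def (ν x : ℝ) : bY ν x = (2:ℝ) ^ (-ν) * (x ^ (ν + 1/2) * bF ν x) := rfl

-- |bF| ≤ B for |x| ≤ 1  (B := tsum of master at q = 1)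
lemma bF_le (ν : ℝ) {x : ℝ} (hx : |x| ≤ 1) :
    |bF ν x| ≤ ∑' m : ℕ, |bc ν m| * ((m : ℝ) + 1) ^ 2 * (1:ℝ) ^ m := by
  rw [bF_def]
  have hsum1 : Summable (fun m : ℕ => |bc ν m| * ((m : ℝ) + 1) ^ 2 * (1:ℝ) ^ m) :=
    bc_summable ν zero_le_one
  have hle : ∀ m : ℕ, |bc ν m * (x / 2) ^ (2 * m)| ≤ |bc ν m| * ((m : ℝ) + 1) ^ 2 * (1:ℝ) ^ m := by
    intro m
    rw [abs_mul, one_pow, abs_pow]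
    have h1 : |x / 2| ≤ 1 := by rw [abs_div, abs_two]; linarith
    have h2 : |x / 2| ^ (2 * m) ≤ 1 := pow_le_one₀ (abs_nonneg _) h1
    have h3 : (1:ℝ) ≤ ((m : ℝ) + 1) ^ 2 := by nlinarith [Nat.cast_nonneg (α := ℝ) m]
    nlinarith [abs_nonneg (bc ν m), abs_nonneg ((x/2)^(2*m)), pow_nonneg (abs_nonneg (x/2)) (2*m)]
  have hsum2 : Summable (fun m : ℕ => ‖bc ν m * (x / 2) ^ (2 * m)‖) := by
    refine Summable.of_nonneg_of_le (fun m => norm_nonneg _) (fun m => ?_) hsum1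
    rw [Real.norm_eq_abs]; exact hle m
  calc |∑' m : ℕ, bc ν m * (x / 2) ^ (2 * m)| ≤ ∑' m : ℕ, ‖bc ν m * (x / 2) ^ (2 * m)‖ :=
        norm_tsum_le_tsum_norm hsum2
    _ ≤ ∑' m : ℕ, |bc ν m| * ((m : ℝ) + 1) ^ 2 * (1:ℝ) ^ m := by
        refine Summable.tsum_le_tsum (fun m => ?_) hsum2 hsum1
        rw [Real.norm_eq_abs]; exact hle m

/-- For every real `ν` and every `x > 0`,
`|J_ν(x)| ≤ c_ν · x^ν · (1+x)^{-ν-1/2}` for some constant `c_ν` depending only on `ν`. -/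
theorem besselJ_bound (ν : ℝ) :
    ∃ c : ℝ, 0 < c ∧ ∀ x : ℝ, 0 < x →
      |besselJ ν x| ≤ c * x ^ ν * (1 + x) ^ (-ν - 1/2) := by
  set A : ℝ := Real.sqrt (bPhi ν 1) with hA
  have hAnn : 0 ≤ A := Real.sqrt_nonneg _
  set B : ℝ := ∑' m : ℕ, |bc ν m| * ((m : ℝ) + 1) ^ 2 * (1:ℝ) ^ m with hB
  have hBnn : 0 ≤ B := tsum_nonneg fun m => by positivity
  set α : ℝ := -ν - 1/2 with hα
  set δ : ℝ := min 1 ((2:ℝ) ^ α) with hδ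
  have hδpos : 0 < δ := lt_min one_pos (Real.rpow_pos_of_pos two_pos _)
  set S : ℝ := A + (2:ℝ) ^ (-ν) * B + 1 with hS
  have hSpos : 0 < S := by positivity
  refine ⟨S / δ, by positivity, fun x hx => ?_⟩
  have hxν : (0:ℝ) ≤ x ^ ν := Real.rpow_nonneg hx.le ν
  have h1x : (0:ℝ) < 1 + x := by linarith
  rcases le_total 1 x with hx1 | hx1
  · -- large x
    have hxhalf : (0:ℝ) < x ^ (-(1/2) : ℝ) := Real.rpow_pos_of_pos hx _
    have hJ : |besselJ ν x| ≤ A * x ^ (-(1/2) : ℝ) := by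
      have hYx : bY ν x = besselJ ν x * x ^ ((1:ℝ)/2) := by
        rw [bY_def, besselJ_eq]
        rw [Real.div_rpow hx.le (by norm_num : (0:ℝ) ≤ 2)]
        rw [show ν + 1/2 = ν + (1:ℝ)/2 by norm_num, Real.rpow_add hx]
        rw [Real.rpow_neg (by norm_num : (0:ℝ) ≤ 2)]
        field_simp
      have h2 : |bY ν x| = |besselJ ν x| * x ^ ((1:ℝ)/2) := by
        rw [hYx, abs_mul, abs_of_nonneg (Real.rpow_nonneg hx.le _)]
      have h3 : |besselJ ν x| * x ^ ((1:ℝ)/2) ≤ A := h2 ▸ bY_bound ν hx1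
      have h4 : x ^ ((1:ℝ)/2) * x ^ (-(1/2) : ℝ) = 1 := by
        rw [← Real.rpow_add hx]; norm_num
      calc |besselJ ν x| = |besselJ ν x| * (x ^ ((1:ℝ)/2) * x ^ (-(1/2) : ℝ)) := by
            rw [h4, mul_one]
        _ = (|besselJ ν x| * x ^ ((1:ℝ)/2)) * x ^ (-(1/2) : ℝ) := by ring
        _ ≤ A * x ^ (-(1/2) : ℝ) := mul_le_mul_of_nonneg_right h3 hxhalf.le
    have hkey : δ * x ^ (-(1/2) : ℝ) ≤ x ^ ν * (1 + x) ^ α := by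
      rcases le_total α 0 with hα0 | hα0
      · have hb : ((2:ℝ) * x) ^ α ≤ (1 + x) ^ α :=
          Real.rpow_le_rpow_of_nonpos h1x (by linarith) hα0
        have hmul : ((2:ℝ) * x) ^ α = (2:ℝ) ^ α * x ^ α :=
          Real.mul_rpow (by norm_num) hx.le
        have hxx : x ^ ν * x ^ α = x ^ (-(1/2) : ℝ) := by
          rw [← Real.rpow_add hx]; congr 1; rw [hα]; ring
        have : x ^ ν * (1 + x) ^ α ≥ x ^ ν * ((2:ℝ) ^ α * x ^ α) :=
          mul_le_mul_of_nonneg_left (hmul ▸ hb) hxν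
        calc δ * x ^ (-(1/2) : ℝ) ≤ (2:ℝ) ^ α * x ^ (-(1/2) : ℝ) :=
              mul_le_mul_of_nonneg_right (min_le_right _ _) hxhalf.le
          _ = x ^ ν * ((2:ℝ) ^ α * x ^ α) := by rw [← hxx]; ring
          _ ≤ x ^ ν * (1 + x) ^ α := this
      · have hb : x ^ α ≤ (1 + x) ^ α := Real.rpow_le_rpow hx.le (by linarith) hα0
        have hxx : x ^ ν * x ^ α = x ^ (-(1/2) : ℝ) := by
          rw [← Real.rpow_add hx]; congr 1; rw [hα]; ring
        calc δ * x ^ (-(1/2) : ℝ) ≤ 1 * x ^ (-(1/2) : ℝ) :=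
              mul_le_mul_of_nonneg_right (min_le_left _ _) hxhalf.le
          _ = x ^ ν * x ^ α := by rw [hxx, one_mul]
          _ ≤ x ^ ν * (1 + x) ^ α := mul_le_mul_of_nonneg_left hb hxν
    calc |besselJ ν x| ≤ A * x ^ (-(1/2) : ℝ) := hJ
      _ ≤ S * x ^ (-(1/2) : ℝ) := mul_le_mul_of_nonneg_right (by rw [hS]; nlinarith [mul_nonneg (Real.rpow_nonneg (by norm_num : (0:ℝ) ≤ 2) (-ν)) hBnn]) hxhalf.le
      _ = (S / δ) * (δ * x ^ (-(1/2) : ℝ)) := by field_simp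
      _ ≤ (S / δ) * (x ^ ν * (1 + x) ^ α) :=
          mul_le_mul_of_nonneg_left hkey (by positivity)
      _ = S / δ * x ^ ν * (1 + x) ^ α := by ring
  · -- small x
    have hJ : |besselJ ν x| ≤ x ^ ν * ((2:ℝ) ^ (-ν) * B) := by
      rw [besselJ_eq, abs_mul, abs_of_nonneg (Real.rpow_nonneg (by positivity : (0:ℝ) ≤ x/2) ν)]
      have hF : |bF ν x| ≤ B := bF_le ν (by rw [abs_of_pos hx]; exact hx1)
      have hsplit : (x / 2) ^ ν = x ^ ν * (2:ℝ) ^ (-ν) := by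
        rw [Real.div_rpow hx.le (by norm_num : (0:ℝ) ≤ 2),
          Real.rpow_neg (by norm_num : (0:ℝ) ≤ 2)]
        field_simp
      rw [hsplit]
      calc |bF ν x| * (x ^ ν * (2:ℝ) ^ (-ν)) ≤ B * (x ^ ν * (2:ℝ) ^ (-ν)) :=
            mul_le_mul_of_nonneg_right hF (by positivity)
        _ = x ^ ν * ((2:ℝ) ^ (-ν) * B) := by ring
    have hkey : δ ≤ (1 + x) ^ α := by
      rcases le_total α 0 with hα0 | hα0
      · have : ((2:ℝ)) ^ α ≤ (1 + x) ^ α :=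
          Real.rpow_le_rpow_of_nonpos h1x (by linarith) hα0
        exact (min_le_right _ _).trans this
      · have : (1:ℝ) ^ α ≤ (1 + x) ^ α := Real.rpow_le_rpow zero_le_one (by linarith) hα0
        rw [Real.one_rpow] at this
        exact (min_le_left _ _).trans this
    calc |besselJ ν x| ≤ x ^ ν * ((2:ℝ) ^ (-ν) * B) := hJ
      _ ≤ x ^ ν * S := by
          refine mul_le_mul_of_nonneg_left ?_ hxν
          rw [hS]; nlinarith [hAnn]
      _ = (S / δ) * x ^ ν * δ := by field_simp
      _ ≤ (S / δ) * x ^ ν * (1 + x) ^ α :=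
          mul_le_mul_of_nonneg_left hkey (by positivity)
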